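/- In the case 1/R ≤ x ≤ R ≤ y: if 2f'(u) + q₀|g'(u)|² ≤ K on (0,∞) with q₀ > 1, then 2(y−x)(f(R)−f(x)) + q₀|g(R)−g(x)|² ≤ 2K(y−x)². -/

import Mathlib

open MeasureTheory

lemma cs_interval (x R : ℝ) (hxR : x ≤ R) (g' : ℝ → ℝ)
    (hc : ContinuousOn g' (Set.Icc x R)) :
    (∫ u in x..R, g' u) ^ 2 ≤ (R - x) * ∫ u in x..R, |g' u| ^ 2 := by
  set μ := volume.restrict (Set.Ioc x R) with hμ
  haveI : IsFiniteMeasure μ := ⟨by simp [hμ, Real.volume_Ioc]⟩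
  obtain ⟨C, hC⟩ := (isCompact_Icc (a := x) (b := R)).exists_bound_of_continuousOn hc
  have hmeas : AEStronglyMeasurable g' μ :=
    (hc.mono Set.Ioc_subset_Icc_self).aestronglyMeasurable measurableSet_Ioc
  have hae : ∀ᵐ u ∂μ, ‖g' u‖ ≤ C := by
    refine (ae_restrict_iff' measurableSet_Ioc).2 (ae_of_all _ fun u hu => ?_)
    exact hC u (Set.Ioc_subset_Icc_self hu)
  have hmem : MemLp g' (ENNReal.ofReal 2) μ := MemLp.of_bound hmeas C hae
  have hone : MemLp (fun _ : ℝ => (1 : ℝ)) (ENNReal.ofReal 2) μ := memLp_const 1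
  have hpq : Real.HolderConjugate 2 2 := by constructor <;> norm_num
  have H := MeasureTheory.integral_mul_norm_le_Lp_mul_Lq hpq hmem hone
  simp only [norm_one, mul_one, Real.one_rpow] at H
  set A := ∫ u, ‖g' u‖ ^ (2 : ℝ) ∂μ with hA
  have hAnn : 0 ≤ A := integral_nonneg fun u => Real.rpow_nonneg (norm_nonneg _) _
  have hBval : (∫ _u, (1:ℝ) ∂μ) = R - x := by
    simp [hμ, Real.volume_Ioc, ENNReal.toReal_ofReal (sub_nonneg.2 hxR), hxR]
  rw [hBval] at H
  have hRx : (0:ℝ) ≤ R - x := sub_nonneg.2 hxR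
  have h1 : |∫ u in x..R, g' u| ≤ ∫ u, ‖g' u‖ ∂μ := by
    rw [intervalIntegral.integral_of_le hxR]
    exact norm_integral_le_integral_norm g'
  have h2 : (∫ u in x..R, g' u) ^ 2 ≤ (A ^ (1/2:ℝ) * (R - x) ^ (1/2:ℝ)) ^ 2 := by
    rw [← sq_abs]
    exact pow_le_pow_left₀ (abs_nonneg _) (h1.trans H) 2
  have h3 : (A ^ (1/2:ℝ) * (R - x) ^ (1/2:ℝ)) ^ 2 = A * (R - x) := by
    rw [mul_pow, ← Real.rpow_natCast (A ^ (1/2:ℝ)) 2, ← Real.rpow_natCast ((R-x) ^ (1/2:ℝ)) 2,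
      ← Real.rpow_mul hAnn, ← Real.rpow_mul hRx]
    norm_num
  have hAval : A = ∫ u in x..R, |g' u| ^ 2 := by
    rw [intervalIntegral.integral_of_le hxR, hA]
    refine integral_congr_ae (ae_of_all _ fun u => ?_)
    show ‖g' u‖ ^ (2:ℝ) = |g' u| ^ 2
    rw [Real.norm_eq_abs, show (2:ℝ) = ((2:ℕ):ℝ) by norm_num, Real.rpow_natCast]
  rw [hAval] at h2 h3
  exact h2.trans_eq (h3.trans (mul_comm _ _))

/-- Key case `1/R ≤ x ≤ R ≤ y`: under the derivative bound
`2 f'(u) + q₀ |g'(u)|² ≤ K` on `(0,∞)` with `q₀ > 1`, one has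
`2 (y−x)(f(R)−f(x)) + q₀ |g(R)−g(x)|² ≤ 2K (y−x)²`. -/
theorem truncated_monotonicity_key_case
    (f g f' g' : ℝ → ℝ) (q₀ K R x y : ℝ) (hq : 1 < q₀) (hK : 0 < K) (hR : 1 < R)
    (hf : ∀ u > (0 : ℝ), HasDerivAt f (f' u) u)
    (hg : ∀ u > (0 : ℝ), HasDerivAt g (g' u) u)
    (hf' : ContinuousOn f' (Set.Ioi 0))
    (hg' : ContinuousOn g' (Set.Ioi 0))
    (hbound : ∀ u > (0 : ℝ), 2 * f' u + q₀ * |g' u| ^ 2 ≤ K)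
    (hx1 : 1 / R ≤ x) (hxR : x ≤ R) (hRy : R ≤ y) :
    2 * (y - x) * (f R - f x) + q₀ * |g R - g x| ^ 2 ≤ 2 * K * (y - x) ^ 2 := by
  have hx0 : 0 < x := lt_of_lt_of_le (by positivity) hx1
  have huIcc : Set.uIcc x R = Set.Icc x R := Set.uIcc_of_le hxR
  have hsub : Set.uIcc x R ⊆ Set.Ioi 0 := by
    rw [huIcc]; exact fun u hu => lt_of_lt_of_le hx0 hu.1
  have hfc : ContinuousOn f' (Set.uIcc x R) := hf'.mono hsub
  have hgc : ContinuousOn g' (Set.uIcc x R) := hg'.mono hsub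
  have hfi : IntervalIntegrable f' volume x R := hfc.intervalIntegrable
  have hgi : IntervalIntegrable g' volume x R := hgc.intervalIntegrable
  have hgi2 : IntervalIntegrable (fun u => |g' u| ^ 2) volume x R :=
    ((hgc.abs).pow 2).intervalIntegrable
  have hFTCf : ∫ u in x..R, f' u = f R - f x :=
    intervalIntegral.integral_eq_sub_of_hasDerivAt (fun u hu => hf u (hsub hu)) hfi
  have hFTCg : ∫ u in x..R, g' u = g R - g x :=
    intervalIntegral.integral_eq_sub_of_hasDerivAt (fun u hu => hg u (hsub hu)) hgi
  have hCS : (g R - g x) ^ 2 ≤ (R - x) * ∫ u in x..R, |g' u| ^ 2 := by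
    rw [← hFTCg]
    exact cs_interval x R hxR g' (hgc.mono (by rw [huIcc]))
  set I1 := ∫ u in x..R, f' u with hI1
  set I2 := ∫ u in x..R, |g' u| ^ 2 with hI2
  have hI2nn : 0 ≤ I2 := by
    rw [hI2, intervalIntegral.integral_of_le hxR]
    exact MeasureTheory.integral_nonneg fun u => by positivity
  have hsum : 2 * I1 + q₀ * I2 ≤ K * (R - x) := by
    have hcomb : IntervalIntegrable (fun u => 2 * f' u + q₀ * |g' u| ^ 2) volume x R :=
      (hfi.const_mul 2).add (hgi2.const_mul q₀)
    have hmono : (∫ u in x..R, (2 * f' u + q₀ * |g' u| ^ 2)) ≤ ∫ _u in x..R, K := by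
      refine intervalIntegral.integral_mono_on hxR hcomb intervalIntegrable_const
        fun u hu => hbound u (lt_of_lt_of_le hx0 hu.1)
    rw [intervalIntegral.integral_add (hfi.const_mul 2) (hgi2.const_mul q₀),
      intervalIntegral.integral_const_mul, intervalIntegral.integral_const_mul,
      ] at hmono
    rw [intervalIntegral.integral_const, smul_eq_mul, mul_comm] at hmono
    linarith [hmono]
  have hfeq : f R - f x = I1 := hFTCf.symm
  rw [hfeq, sq_abs]
  have hq0 : (0:ℝ) ≤ q₀ := le_of_lt (lt_trans one_pos hq)
  have hyx : (0:ℝ) ≤ y - x := by linarith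
  have hRx : (0:ℝ) ≤ R - x := by linarith
  nlinarith [mul_le_mul_of_nonneg_left hsum hyx,
    mul_le_mul_of_nonneg_left hCS hq0,
    mul_nonneg (mul_nonneg hq0 hI2nn) (sub_nonneg.2 hRy),
    mul_nonneg (mul_nonneg hK.le hyx) (sub_nonneg.2 hRy),
    mul_nonneg hK.le (sq_nonneg (y - x))]
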